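/- For every real p ∈ (0,1) and every integer k ≥ 1, 0 ≤ p/(k(k+1)) − ((k+1)^p − k^p)/(k^p (k+1)) ≤ p(1−p)/(2k³). -/

import Mathlib

open Real

/-- Bernoulli-type lower bound for negative exponent: `(1+t)^(p-1) ≥ 1 - (1-p)t`. -/
lemma aux_deriv_bound (p : ℝ) (hp0 : 0 < p) (hp1 : p < 1) (t : ℝ) (ht : 0 ≤ t) :
    1 - (1 - p) * t ≤ (1 + t) ^ (p - 1) := by
  have h1t : (0:ℝ) < 1 + t := by linarith
  rcases le_or_gt (1 - (1 - p) * t) 0 with h | h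
  · exact h.trans (rpow_pos_of_pos h1t _).le
  · have hb : (1 + t) ^ (1 - p) ≤ 1 + (1 - p) * t :=
      rpow_one_add_le_one_add_mul_self (by linarith) (by linarith) (by linarith)
    have hpos : (0:ℝ) < (1 + t) ^ (1 - p) := rpow_pos_of_pos h1t _
    have key : (1 - (1 - p) * t) * (1 + t) ^ (1 - p) ≤ 1 := by
      calc (1 - (1 - p) * t) * (1 + t) ^ (1 - p)
          ≤ (1 - (1 - p) * t) * (1 + (1 - p) * t) :=
            mul_le_mul_of_nonneg_left hb h.le
        _ = 1 - ((1 - p) * t) ^ 2 := by ring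
        _ ≤ 1 := by nlinarith [sq_nonneg ((1 - p) * t)]
    have h2 : 1 - (1 - p) * t ≤ 1 / (1 + t) ^ (1 - p) := (le_div_iff₀ hpos).mpr key
    rw [show p - 1 = -(1 - p) by ring, rpow_neg h1t.le]
    simpa [one_div] using h2

/-- Second-order Bernoulli: `1 + pt - p(1-p)t²/2 ≤ (1+t)^p` for `t ≥ 0`, `0 < p < 1`. -/
lemma aux_second_order (p : ℝ) (hp0 : 0 < p) (hp1 : p < 1) (t : ℝ) (ht : 0 ≤ t) :
    1 + p * t - p * (1 - p) * t ^ 2 / 2 ≤ (1 + t) ^ p := by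
  set g : ℝ → ℝ := fun x => (1 + x) ^ p - p * x + p * (1 - p) * x ^ 2 / 2 with hg
  have hderiv : ∀ x ∈ Set.Ici (0:ℝ),
      HasDerivAt g (p * (1 + x) ^ (p - 1) - p + p * (1 - p) * x) x := by
    intro x hx
    have h1x : (0:ℝ) < 1 + x := by simp at hx; linarith
    have h1 : HasDerivAt (fun x : ℝ => (1 + x) ^ p) (p * (1 + x) ^ (p - 1)) x := by
      have := (Real.hasDerivAt_rpow_const (p := p) (x := 1 + x) (Or.inl h1x.ne')).comp x
        ((hasDerivAt_id x).const_add 1)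
      simp only [mul_one] at this
      exact this
    have h2 : HasDerivAt (fun x : ℝ => p * x) p x := by
      simpa using (hasDerivAt_id x).const_mul p
    have h3 : HasDerivAt (fun x : ℝ => p * (1 - p) * x ^ 2 / 2) (p * (1 - p) * x) x := by
      have := ((hasDerivAt_pow 2 x).const_mul (p * (1 - p))).div_const 2
      refine this.congr_deriv ?_
      ring
    exact (h1.sub h2).add h3
  have hmono : MonotoneOn g (Set.Ici (0:ℝ)) := by
    apply monotoneOn_of_deriv_nonneg (convex_Ici 0)
    · exact fun x hx => ((hderiv x hx).continuousAt).continuousWithinAt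
    · intro x hx
      rw [interior_Ici] at hx
      exact (hderiv x (Set.mem_Ici.mpr (le_of_lt hx))).differentiableAt.differentiableWithinAt
    · intro x hx
      rw [interior_Ici] at hx
      have hx0 : (0:ℝ) ≤ x := le_of_lt hx
      rw [(hderiv x (Set.mem_Ici.mpr hx0)).deriv]
      have hb := aux_deriv_bound p hp0 hp1 x hx0
      nlinarith
  have h0 : g 0 = 1 := by simp [hg]
  have := hmono (Set.self_mem_Ici) (Set.mem_Ici.mpr ht) ht
  rw [h0] at this
  simp only [hg] at this
  linarith

theorem stmt_8 (p : ℝ) (hp0 : 0 < p) (hp1 : p < 1) (k : ℕ) (hk : 1 ≤ k) :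
    0 ≤ p / ((k : ℝ) * ((k : ℝ) + 1))
        - (((k : ℝ) + 1) ^ p - (k : ℝ) ^ p) / ((k : ℝ) ^ p * ((k : ℝ) + 1)) ∧
    p / ((k : ℝ) * ((k : ℝ) + 1))
        - (((k : ℝ) + 1) ^ p - (k : ℝ) ^ p) / ((k : ℝ) ^ p * ((k : ℝ) + 1))
      ≤ p * (1 - p) / (2 * (k : ℝ) ^ 3) := by
  have hk0 : (0:ℝ) < (k:ℝ) := by exact_mod_cast hk
  have hk1 : (0:ℝ) < (k:ℝ) + 1 := by linarith
  set t : ℝ := 1 / (k:ℝ) with hts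
  have ht0 : 0 < t := by positivity
  have hsplit : ((k:ℝ) + 1) ^ p = (k:ℝ) ^ p * (1 + t) ^ p := by
    rw [← Real.mul_rpow hk0.le (by positivity)]
    congr 1
    rw [hts, mul_add, mul_one, mul_one_div, div_self hk0.ne']
  have hkp : (0:ℝ) < (k:ℝ) ^ p := rpow_pos_of_pos hk0 p
  have hE : p / ((k : ℝ) * ((k : ℝ) + 1))
        - (((k : ℝ) + 1) ^ p - (k : ℝ) ^ p) / ((k : ℝ) ^ p * ((k : ℝ) + 1))
      = (p * t - ((1 + t) ^ p - 1)) / ((k:ℝ) + 1) := by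
    rw [hsplit, hts]
    field_simp
  rw [hE]
  constructor
  · apply div_nonneg _ hk1.le
    have := rpow_one_add_le_one_add_mul_self (s := t) (by linarith) hp0.le hp1.le
    linarith
  · have h2 := aux_second_order p hp0 hp1 t ht0.le
    have hnum : p * t - ((1 + t) ^ p - 1) ≤ p * (1 - p) * t ^ 2 / 2 := by linarith
    have ht2 : t ^ 2 = 1 / (k:ℝ) ^ 2 := by rw [hts]; field_simp
    have hk1' : (1:ℝ) ≤ (k:ℝ) := by exact_mod_cast hk
    have hpp : 0 < p * (1 - p) := mul_pos hp0 (by linarith)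
    calc (p * t - ((1 + t) ^ p - 1)) / ((k:ℝ) + 1)
        ≤ (p * (1 - p) * t ^ 2 / 2) / ((k:ℝ) + 1) := by gcongr
      _ = p * (1 - p) / (2 * (k:ℝ) ^ 2 * ((k:ℝ) + 1)) := by
          rw [ht2]; field_simp
      _ ≤ p * (1 - p) / (2 * (k:ℝ) ^ 3) := by
          rw [div_le_div_iff₀ (by positivity) (by positivity)]
          nlinarith [mul_nonneg hpp.le (sq_nonneg ((k:ℝ)))]
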